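/- Let X_0 be a real-valued random variable such that 0 < G(r) < ∞ for every r ≥ 0. Then for every r ≥ 0, the variance Var[U_r(X_0)] is strictly positive. -/

import Mathlib

open MeasureTheory ProbabilityTheory Filter Asymptotics
open scoped ENNReal Topology NNReal

noncomputable section

/-- The shrinking operator `U_r : ℝ → ℝ` (for `r ≥ 0`):
`U_r(x) = x - r` if `x > r`, `0` if `|x| ≤ r`, and `x + r` if `x < -r`. -/
def shrink (r x : ℝ) : ℝ := if r < x then x - r else if x < -r then x + r else 0

variable {Ω : Type*}

/-- `G(r) := ∫₀^∞ t · P(|X| > t + r) dt`. -/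
def Gfun [MeasurableSpace Ω] (P : Measure Ω) (X : Ω → ℝ) (r : ℝ) : ℝ≥0∞ :=
  ∫⁻ t in Set.Ioi (0 : ℝ), ENNReal.ofReal t * P {ω | t + r < |X ω|}

/-- Strict stationarity of a two-sided sequence of random variables: for all `j, l ∈ ℤ`
and `m ≥ 0`, the random vectors `(X_j, …, X_{j+m})` and `(X_l, …, X_{l+m})` have the
same distribution. -/
def StrictlyStationary [MeasurableSpace Ω] (P : Measure Ω) (X : ℤ → Ω → ℝ) : Prop :=
  ∀ (j l : ℤ) (m : ℕ),
    Measure.map (fun ω => fun i : Fin (m + 1) => X (j + i) ω) P =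
    Measure.map (fun ω => fun i : Fin (m + 1) => X (l + i) ω) P

/-- The correlation coefficient of two real random variables. -/
def corr [MeasurableSpace Ω] (P : Measure Ω) (f g : Ω → ℝ) : ℝ :=
  (∫ ω, (f ω - ∫ x, f x ∂P) * (g ω - ∫ x, g x ∂P) ∂P) /
    (Real.sqrt (∫ ω, (f ω - ∫ x, f x ∂P) ^ 2 ∂P) *
      Real.sqrt (∫ ω, (g ω - ∫ x, g x ∂P) ^ 2 ∂P))

/-- The maximal correlation coefficient `ρ(𝒜, ℬ)`: the supremum of `|Corr(f,g)|` over
square-integrable `f` measurable w.r.t. `𝒜` and `g` measurable w.r.t. `ℬ`. -/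
def maxCorr [mΩ : MeasurableSpace Ω] (P : Measure Ω) (A B : MeasurableSpace Ω) : ℝ :=
  sSup { c | ∃ f g : Ω → ℝ, Measurable[A] f ∧ Measurable[B] g ∧
    MemLp (m0 := mΩ) f 2 P ∧ MemLp (m0 := mΩ) g 2 P ∧ c = |@corr Ω mΩ P f g| }

/-- The strong mixing coefficient `α(𝒜, ℬ)`. -/
def alphaMix [MeasurableSpace Ω] (P : Measure Ω) (A B : MeasurableSpace Ω) : ℝ :=
  sSup { c | ∃ s t : Set Ω, MeasurableSet[A] s ∧ MeasurableSet[B] t ∧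
    c = |(P (s ∩ t)).toReal - (P s).toReal * (P t).toReal| }

/-- The σ-field generated by the random variables `X k`, `k ∈ S`. -/
def genFrom [MeasurableSpace Ω] (X : ℤ → Ω → ℝ) (S : Set ℤ) : MeasurableSpace Ω :=
  ⨆ k ∈ S, MeasurableSpace.comap (X k) inferInstance

/-- `ρ(n) = ρ(σ(X_k, k ≤ 0), σ(X_k, k ≥ n))`. -/
def rhoCoef [MeasurableSpace Ω] (P : Measure Ω) (X : ℤ → Ω → ℝ) (n : ℕ) : ℝ :=
  maxCorr P (genFrom X {k | k ≤ 0}) (genFrom X {k | (n : ℤ) ≤ k})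

/-- `α(n) = α(σ(X_k, k ≤ 0), σ(X_k, k ≥ n))`. -/
def alphaCoef [MeasurableSpace Ω] (P : Measure Ω) (X : ℤ → Ω → ℝ) (n : ℕ) : ℝ :=
  alphaMix P (genFrom X {k | k ≤ 0}) (genFrom X {k | (n : ℤ) ≤ k})

/-- `ρ*(n)`: the supremum of `ρ(σ(X_k, k ∈ S), σ(X_k, k ∈ T))` over all pairs of nonempty
disjoint `S, T ⊆ ℤ` with `dist(S,T) ≥ n`. -/
def rhoStarCoef [MeasurableSpace Ω] (P : Measure Ω) (X : ℤ → Ω → ℝ) (n : ℕ) : ℝ :=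
  sSup { c | ∃ S T : Set ℤ, S.Nonempty ∧ T.Nonempty ∧ Disjoint S T ∧
    (∀ s ∈ S, ∀ t ∈ T, (n : ℤ) ≤ |s - t|) ∧
    c = maxCorr P (genFrom X S) (genFrom X T) }

/-- `Y_{k,r} := U_r(X_k) - E[U_r(X_0)]`. -/
def Ymix [MeasurableSpace Ω] (P : Measure Ω) (X : ℤ → Ω → ℝ) (k : ℤ) (r : ℝ) (ω : Ω) : ℝ :=
  shrink r (X k ω) - ∫ ω', shrink r (X 0 ω') ∂P


lemma measurable_shrink (r : ℝ) : Measurable (shrink r) := by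
  unfold shrink
  exact Measurable.ite (measurableSet_lt measurable_const measurable_id)
    (measurable_id.sub_const r)
    (Measurable.ite (measurableSet_lt measurable_id measurable_const)
      (measurable_id.add_const r) measurable_const)

lemma shrink_lt_iff {r t x : ℝ} (hr : 0 ≤ r) (ht : 0 < t) :
    t < |shrink r x| ↔ t + r < |x| := by
  unfold shrink
  split_ifs with h1 h2
  · rw [abs_of_nonneg (by linarith : (0:ℝ) ≤ x - r), abs_of_pos (by linarith : (0:ℝ) < x)]
    constructor <;> intro <;> linarith
  · rw [abs_of_nonpos (by linarith : x + r ≤ 0), abs_of_neg (by linarith : x < 0)]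
    constructor <;> intro <;> linarith
  · have hx : |x| ≤ r := abs_le.2 ⟨by linarith, by linarith⟩
    rw [abs_zero]
    constructor <;> intro <;> linarith

lemma abs_le_of_shrink_eq {r c x : ℝ} (hr : 0 ≤ r) (h : shrink r x = c) :
    |x| ≤ |c| + r := by
  unfold shrink at h
  split_ifs at h with h1 h2
  · rw [abs_of_pos (by linarith : (0:ℝ) < x)]
    have := le_abs_self c
    linarith
  · rw [abs_of_neg (by linarith : x < 0)]
    have := neg_abs_le c
    linarith
  · have hx : |x| ≤ r := abs_le.2 ⟨by linarith, by linarith⟩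
    have := abs_nonneg c
    linarith

/-- **Positivity of the variance in (4.3).** If `0 < G(r) < ∞` for all `r ≥ 0`, then
`Var[U_r(X_0)] > 0` for every `r ≥ 0`. -/
theorem variance_shrink_pos
    [MeasurableSpace Ω] (P : Measure Ω) [IsProbabilityMeasure P]
    (X₀ : Ω → ℝ) (hmeas : Measurable X₀)
    (hG : ∀ r : ℝ, 0 ≤ r → 0 < Gfun P X₀ r ∧ Gfun P X₀ r < ∞) :
    ∀ r : ℝ, 0 ≤ r → 0 < variance (fun ω => shrink r (X₀ ω)) P := by
  intro r hr
  have hmeas' : Measurable fun ω => shrink r (X₀ ω) := (measurable_shrink r).comp hmeas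
  -- layer cake computation
  have key : ∫⁻ ω, (‖shrink r (X₀ ω)‖₊ : ℝ≥0∞) ^ (2:ℝ) ∂P = ENNReal.ofReal 2 * Gfun P X₀ r := by
    calc ∫⁻ ω, (‖shrink r (X₀ ω)‖₊ : ℝ≥0∞) ^ (2:ℝ) ∂P
        = ∫⁻ ω, ENNReal.ofReal (|shrink r (X₀ ω)| ^ (2:ℝ)) ∂P := by
          refine lintegral_congr fun ω => ?_
          rw [← enorm_eq_nnnorm, Real.enorm_eq_ofReal_abs,
            ENNReal.ofReal_rpow_of_nonneg (abs_nonneg _) (by norm_num)]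
      _ = ENNReal.ofReal 2 * ∫⁻ t in Set.Ioi (0:ℝ),
            P {a | t < |shrink r (X₀ a)|} * ENNReal.ofReal (t ^ (2 - 1 : ℝ)) :=
          lintegral_rpow_eq_lintegral_meas_lt_mul P (ae_of_all _ fun ω => abs_nonneg _)
            hmeas'.abs.aemeasurable two_pos
      _ = ENNReal.ofReal 2 * Gfun P X₀ r := by
          congr 1
          rw [Gfun]
          refine setLIntegral_congr_fun measurableSet_Ioi (fun t ht => ?_)
          have hset : {a | t < |shrink r (X₀ a)|} = {ω | t + r < |X₀ ω|} :=
            Set.ext fun ω => shrink_lt_iff hr ht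
          rw [hset, show (2 - 1 : ℝ) = 1 by norm_num, Real.rpow_one, mul_comm]
  have hMem : MemLp (fun ω => shrink r (X₀ ω)) 2 P := by
    refine ⟨hmeas'.aestronglyMeasurable, ?_⟩
    rw [eLpNorm_lt_top_iff_lintegral_rpow_enorm_lt_top two_ne_zero ENNReal.ofNat_ne_top]
    simp only [ENNReal.toReal_ofNat]
    erw [key]
    exact ENNReal.mul_lt_top ENNReal.ofReal_lt_top (hG r hr).2
  have hne : evariance (fun ω => shrink r (X₀ ω)) P ≠ 0 := by
    intro h0
    rw [evariance_eq_zero_iff hmeas'.aemeasurable] at h0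
    set c := ∫ ω, shrink r (X₀ ω) ∂P with hc
    have habs : ∀ᵐ ω ∂P, |X₀ ω| ≤ |c| + r := by
      filter_upwards [h0] with ω hω
      exact abs_le_of_shrink_eq hr hω
    have hnull : P {ω | ¬ |X₀ ω| ≤ |c| + r} = 0 := ae_iff.1 habs
    have hR : (0:ℝ) ≤ |c| + r := by positivity
    have hGzero : Gfun P X₀ (|c| + r) = 0 := by
      rw [Gfun,
        setLIntegral_congr_fun measurableSet_Ioi (fun t ht => ?_), lintegral_zero]
      have : P {ω | t + (|c| + r) < |X₀ ω|} = 0 := by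
        refine measure_mono_null (fun ω hω => ?_) hnull
        simp only [Set.mem_setOf_eq] at hω ⊢
        intro hle
        have ht' : (0:ℝ) < t := ht
        linarith
      rw [this, mul_zero]
    exact absurd hGzero (hG _ hR).1.ne'
  rw [variance]
  exact ENNReal.toReal_pos hne hMem.evariance_lt_top.ne
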